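/- For any two location parameters μ₁, μ₂ ∈ ℝ, scale b > 0, and any point x ∈ ℝ, the ratio of the Laplace densities satisfies p_{μ₁,b}(x) ≤ exp(|μ₁ − μ₂|/b) · p_{μ₂,b}(x), where p_{μ,b}(x) = (1/(2b)) · exp(−|x − μ|/b). -/

import Mathlib

open Real

/-- Pointwise density-ratio bound for Laplace densities with the same scale. -/
theorem laplace_density_ratio_bound (μ₁ μ₂ b x : ℝ) (hb : 0 < b) :
    (1 / (2 * b)) * Real.exp (-|x - μ₁| / b) ≤
      Real.exp (|μ₁ - μ₂| / b) * ((1 / (2 * b)) * Real.exp (-|x - μ₂| / b)) := by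
  rw [mul_comm (Real.exp _), mul_assoc, ← Real.exp_add]
  have h : -|x - μ₁| / b ≤ -|x - μ₂| / b + |μ₁ - μ₂| / b := by
    rw [add_comm, ← add_div, div_le_div_iff_of_pos_right hb]
    have := abs_sub_abs_le_abs_sub (x - μ₂) (x - μ₁)
    have h2 : (x - μ₂) - (x - μ₁) = μ₁ - μ₂ := by ring
    rw [h2] at this
    linarith
  exact mul_le_mul_of_nonneg_left (Real.exp_le_exp.mpr h) (by positivity)
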